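/- arXiv:2410.01741 — 2 statements merged into one kernel-verified Lean document; each statement's English description precedes it below -/
import Mathlib

section
/- Discrete duality (summation by parts) for the forward-backward pair: let x^w satisfy x^w_{k+1} = A_k x^w_k + B_k w_k + (D_k x^w_k + E_k w_k) ω_k with x^w_0 = 0, and let y satisfy the backward recursion y_k = A_k^⊤ E[y_{k+1} | F_{k-1}] + D_k^⊤ E[y_{k+1} ω_k | F_{k-1}] + φ_k with terminal y_N. Then, assuming w_k and φ_k are F_{k-1}-measurable and all processes square-integrable, E⟨y_N, x^w_N⟩ = E Σ_{k=0}^{N-1} [ -⟨φ_k, x^w_k⟩ + ⟨B_k^⊤ E[y_{k+1}|F_{k-1}] + E_k^⊤ E[y_{k+1} ω_k | F_{k-1}], w_k⟩ ]. -/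
open Matrix MeasureTheory

namespace Stmt6Aux

set_option linter.unusedSectionVars false
set_option autoImplicit false

section
variable {Ω : Type*} {m m0 : MeasurableSpace Ω} {μ : Measure Ω} [IsProbabilityMeasure μ]

lemma one_div_one_eq : (1 : ENNReal)/1 = 1/2 + 1/2 := by
  rw [ENNReal.div_add_div_same]
  norm_num
  rw [eq_comm, ENNReal.div_eq_one_iff] <;> norm_num

lemma memL2_eval {n : ℕ} {f : Ω → Fin n → ℝ} (hf : MemLp f 2 μ) (i : Fin n) :
    MemLp (fun x => f x i) 2 μ := by
  refine MemLp.of_le hf ?_ (Filter.Eventually.of_forall fun x => norm_le_pi_norm (f x) i)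
  exact ((measurable_pi_apply i).comp_aemeasurable hf.aestronglyMeasurable.aemeasurable).aestronglyMeasurable

lemma integrable_mul2 {f g : Ω → ℝ} (hf : MemLp f 2 μ) (hg : MemLp g 2 μ) :
    Integrable (fun x => f x * g x) μ := by
  have h : MemLp (f • g) 1 μ := hg.smul hf
  exact (memLp_one_iff_integrable.mp h).congr (Filter.Eventually.of_forall fun x => by simp)

lemma pullout (hm : m ≤ m0) {f g : Ω → ℝ}
    (hf : StronglyMeasurable[m] f) (hg : Integrable g μ)
    (hfg : Integrable (fun x => f x * g x) μ) :
    ∫ x, f x * g x ∂μ = ∫ x, f x * (μ[g|m]) x ∂μ := by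
  haveI : SigmaFinite (μ.trim hm) := inferInstance
  have h := condExp_mul_of_stronglyMeasurable_left (μ := μ) hf (show Integrable (f * g) μ from hfg) hg
  calc ∫ x, f x * g x ∂μ = ∫ x, (μ[f * g|m]) x ∂μ := (integral_condExp hm).symm
    _ = ∫ x, f x * (μ[g|m]) x ∂μ := integral_congr_ae (h.mono fun x hx => by simpa using hx)

lemma condExp_apply_ae {n : ℕ} (hm : m ≤ m0)
    {f : Ω → Fin n → ℝ} (hf : Integrable f μ) (i : Fin n) :
    (fun x => (μ[f|m]) x i) =ᵐ[μ] μ[fun x => f x i|m] := by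
  haveI : SigmaFinite (μ.trim hm) := inferInstance
  have hLf : Integrable (fun x => f x i) μ :=
    (ContinuousLinearMap.proj (R := ℝ) (φ := fun _ : Fin n => ℝ) i).integrable_comp hf
  have hint : ∀ s : Set Ω, MeasurableSet[m] s → μ s < ⊤ →
      IntegrableOn (fun x => (μ[f|m]) x i) s μ := fun s _ _ =>
    ((ContinuousLinearMap.proj (R := ℝ) (φ := fun _ : Fin n => ℝ) i).integrable_comp
      (integrable_condExp (f := f))).integrableOn
  have heq : ∀ s : Set Ω, MeasurableSet[m] s → μ s < ⊤ →
      ∫ x in s, (μ[f|m]) x i ∂μ = ∫ x in s, f x i ∂μ := by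
    intro s hs _
    set L : (Fin n → ℝ) →L[ℝ] ℝ := ContinuousLinearMap.proj (R := ℝ) (φ := fun _ : Fin n => ℝ) i
      with hL
    have h1 : ∫ x in s, L ((μ[f|m]) x) ∂μ = L (∫ x in s, (μ[f|m]) x ∂μ) :=
      L.integral_comp_comm integrable_condExp.integrableOn
    have h2 : ∫ x in s, L (f x) ∂μ = L (∫ x in s, f x ∂μ) :=
      L.integral_comp_comm hf.integrableOn
    rw [setIntegral_condExp hm hf hs] at h1
    calc ∫ x in s, (μ[f|m]) x i ∂μ = ∫ x in s, L ((μ[f|m]) x) ∂μ := rfl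
      _ = L (∫ x in s, f x ∂μ) := h1
      _ = ∫ x in s, f x i ∂μ := h2.symm
  exact ae_eq_condExp_of_forall_setIntegral_eq hm hLf hint heq
    ((continuous_apply i).comp_stronglyMeasurable (stronglyMeasurable_condExp (f := f) (μ := μ) (m := m))).aestronglyMeasurable

lemma memL2_condExp_mul (hm : m ≤ m0) {r z : Ω → ℝ}
    (hr : MemLp r 2 μ) (hz : MemLp z 2 μ)
    (hvar : μ[fun x => r x ^ 2|m] =ᵐ[μ] 1) :
    MemLp (μ[fun x => r x * z x|m]) 2 μ := by
  haveI : SigmaFinite (μ.trim hm) := inferInstance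
  have hrz : Integrable (fun x => r x * z x) μ := integrable_mul2 hr hz
  have hr2 : Integrable (fun x => r x ^ 2) μ := by
    simpa [pow_two] using integrable_mul2 hr hr
  have hz2 : Integrable (fun x => z x ^ 2) μ := by
    simpa [pow_two] using integrable_mul2 hz hz
  set v := μ[fun x => r x * z x|m] with hv
  set s := μ[fun x => z x ^ 2|m] with hs
  have key : ∀ q : ℚ, ∀ᵐ x ∂μ, 0 ≤ (q : ℝ)^2 + 2*q*(v x) + s x := by
    intro q
    set f1 : Ω → ℝ := fun x => r x ^ 2 with hf1
    set f2 : Ω → ℝ := fun x => r x * z x with hf2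
    set f3 : Ω → ℝ := fun x => z x ^ 2 with hf3
    set c1 : ℝ := (q : ℝ)^2 with hc1
    set c2 : ℝ := 2*(q : ℝ) with hc2
    have hexp : (fun x => ((q : ℝ)*r x + z x)^2) = c1 • f1 + c2 • f2 + f3 := by
      funext x; simp only [Pi.add_apply, Pi.smul_apply, smul_eq_mul, hf1, hf2, hf3, hc1, hc2]
      ring
    have h0 : 0 ≤ᵐ[μ] μ[c1 • f1 + c2 • f2 + f3|m] := by
      rw [← hexp]; exact condExp_nonneg (Filter.Eventually.of_forall fun x => sq_nonneg _)
    have h1 : μ[c1 • f1 + c2 • f2 + f3|m] =ᵐ[μ] μ[c1 • f1 + c2 • f2|m] + μ[f3|m] :=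
      condExp_add ((hr2.smul c1).add (hrz.smul c2)) hz2 m
    have h2 : μ[c1 • f1 + c2 • f2|m] =ᵐ[μ] μ[c1 • f1|m] + μ[c2 • f2|m] :=
      condExp_add (hr2.smul c1) (hrz.smul c2) m
    have h3 : μ[c1 • f1|m] =ᵐ[μ] c1 • μ[f1|m] := condExp_smul c1 f1 m
    have h4 : μ[c2 • f2|m] =ᵐ[μ] c2 • μ[f2|m] := condExp_smul c2 f2 m
    filter_upwards [h0, h1, h2, h3, h4, hvar] with x hx0 hx1 hx2 hx3 hx4 hxvar
    have : (0:ℝ) ≤ c1 * (μ[f1|m]) x + c2 * (v x) + s x := by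
      have := hx0
      rw [hx1, Pi.add_apply, hx2, Pi.add_apply, hx3, hx4] at this
      simpa [smul_eq_mul, hv, hs] using this
    rw [show (μ[f1|m]) x = 1 from hxvar] at this
    simp only [hc1, hc2] at this ⊢
    nlinarith [this]
  have hae : ∀ᵐ x ∂μ, ∀ q : ℚ, 0 ≤ (q : ℝ)^2 + 2*q*(v x) + s x := ae_all_iff.2 key
  have hvs : ∀ᵐ x ∂μ, v x ^ 2 ≤ s x := by
    filter_upwards [hae] with x hx
    have hreal : ∀ t : ℝ, 0 ≤ t^2 + 2*t*(v x) + s x := by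
      intro t
      have hcl : IsClosed {t : ℝ | 0 ≤ t^2 + 2*t*(v x) + s x} :=
        isClosed_le continuous_const (by continuity)
      have hsub : Set.range ((↑) : ℚ → ℝ) ⊆ {t : ℝ | 0 ≤ t^2 + 2*t*(v x) + s x} := by
        rintro _ ⟨q, rfl⟩; exact hx q
      exact hcl.closure_subset_iff.2 hsub (Rat.denseRange_cast t)
    nlinarith [hreal (-(v x))]
  have hsm : AEStronglyMeasurable v μ :=
    (stronglyMeasurable_condExp.mono hm).aestronglyMeasurable
  have hsm2 : AEStronglyMeasurable (fun x => v x ^ 2) μ := by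
    simpa [pow_two] using (show AEStronglyMeasurable (fun x => v x * v x) μ from hsm.mul hsm)
  refine (memLp_two_iff_integrable_sq hsm).2 ?_
  refine Integrable.mono' (g := s)
    (integrable_condExp : Integrable (μ[fun x => z x ^ 2|m]) μ) hsm2 ?_
  filter_upwards [hvs] with x hx
  rw [Real.norm_eq_abs, abs_of_nonneg (sq_nonneg _)]
  exact hx

lemma memL2_bdd_mul {f g : Ω → ℝ} (hfm : AEStronglyMeasurable f μ) {C : ℝ}
    (hC : ∀ x, |f x| ≤ C) (hg : MemLp g 2 μ) :
    MemLp (fun x => f x * g x) 2 μ := by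
  refine MemLp.of_le_mul (c := C) hg (hfm.mul hg.aestronglyMeasurable)
    (Filter.Eventually.of_forall fun x => ?_)
  calc ‖f x * g x‖ = |f x| * ‖g x‖ := by simp [Real.norm_eq_abs, abs_mul]
    _ ≤ C * ‖g x‖ := mul_le_mul_of_nonneg_right (hC x) (norm_nonneg _)

lemma mem2_mulVec {p q : ℕ} {M : Ω → Matrix (Fin p) (Fin q) ℝ}
    (hM : ∀ i j, AEStronglyMeasurable (fun ϖ => M ϖ i j) μ)
    (hMb : ∀ i j, ∃ C, ∀ ϖ, |M ϖ i j| ≤ C)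
    {v : Ω → Fin q → ℝ} (hv : ∀ j, MemLp (fun ϖ => v ϖ j) 2 μ) (i : Fin p) :
    MemLp (fun ϖ => ((M ϖ) *ᵥ (v ϖ)) i) 2 μ := by
  have h : (fun ϖ => ((M ϖ) *ᵥ (v ϖ)) i) = fun ϖ => ∑ j, M ϖ i j * v ϖ j := by
    funext ϖ; simp [Matrix.mulVec, dotProduct]
  rw [h]
  refine memLp_finset_sum _ fun j _ => ?_
  obtain ⟨C, hC⟩ := hMb i j
  exact memL2_bdd_mul (hM i j) hC (hv j)

lemma integrable_dot {p : ℕ} {f g : Ω → Fin p → ℝ}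
    (hf : ∀ i, MemLp (fun ϖ => f ϖ i) 2 μ) (hg : ∀ i, MemLp (fun ϖ => g ϖ i) 2 μ) :
    Integrable (fun ϖ => f ϖ ⬝ᵥ g ϖ) μ := by
  have h : (fun ϖ => f ϖ ⬝ᵥ g ϖ) = fun ϖ => ∑ i, f ϖ i * g ϖ i := by
    funext ϖ; simp [dotProduct]
  rw [h]
  exact integrable_finset_sum _ fun i _ => integrable_mul2 (hf i) (hg i)

lemma integral_dot_eq_sum {p : ℕ} {f g : Ω → Fin p → ℝ}
    (h : ∀ i, Integrable (fun ϖ => f ϖ i * g ϖ i) μ) :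
    ∫ ϖ, f ϖ ⬝ᵥ g ϖ ∂μ = ∑ i, ∫ ϖ, f ϖ i * g ϖ i ∂μ := by
  have h2 : (fun ϖ => f ϖ ⬝ᵥ g ϖ) = fun ϖ => ∑ i, f ϖ i * g ϖ i := by
    funext ϖ; simp [dotProduct]
  rw [h2, integral_finset_sum _ fun i _ => h i]

lemma step_aux {n₁ n₂ : ℕ} (hm : m ≤ m0)
    (A D : Ω → Matrix (Fin n₁) (Fin n₁) ℝ) (B E : Ω → Matrix (Fin n₁) (Fin n₂) ℝ)
    (hA : ∀ i j, Measurable[m] fun ϖ => A ϖ i j)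
    (hB : ∀ i j, Measurable[m] fun ϖ => B ϖ i j)
    (hD : ∀ i j, Measurable[m] fun ϖ => D ϖ i j)
    (hE : ∀ i j, Measurable[m] fun ϖ => E ϖ i j)
    (hAb : ∃ C, ∀ ϖ i j, |A ϖ i j| ≤ C) (hBb : ∃ C, ∀ ϖ i j, |B ϖ i j| ≤ C)
    (hDb : ∃ C, ∀ ϖ i j, |D ϖ i j| ≤ C) (hEb : ∃ C, ∀ ϖ i j, |E ϖ i j| ≤ C)
    (ω : Ω → ℝ) (hω2 : MemLp ω 2 μ)
    (hωvar : μ[fun x => (ω x) ^ 2|m] =ᵐ[μ] 1)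
    (x x' : Ω → Fin n₁ → ℝ) (hx : StronglyMeasurable[m] x)
    (hx2 : MemLp x 2 μ) (hx'2 : MemLp x' 2 μ)
    (w : Ω → Fin n₂ → ℝ) (hw : StronglyMeasurable[m] w) (hw2 : MemLp w 2 μ)
    (φv : Ω → Fin n₁ → ℝ) (hφ2 : MemLp φv 2 μ)
    (Y Z : Ω → Fin n₁ → ℝ) (hY2 : MemLp Y 2 μ)
    (hrec : ∀ᵐ ϖ ∂μ, x' ϖ =
      A ϖ *ᵥ x ϖ + B ϖ *ᵥ w ϖ + ω ϖ • (D ϖ *ᵥ x ϖ + E ϖ *ᵥ w ϖ))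
    (hback : ∀ᵐ ϖ ∂μ, Z ϖ =
      (A ϖ)ᵀ *ᵥ ((μ[Y|m]) ϖ) + (D ϖ)ᵀ *ᵥ ((μ[fun ϖ' => ω ϖ' • Y ϖ'|m]) ϖ) + φv ϖ) :
    Integrable (fun ϖ => -(φv ϖ ⬝ᵥ x ϖ) +
      ((B ϖ)ᵀ *ᵥ ((μ[Y|m]) ϖ) + (E ϖ)ᵀ *ᵥ ((μ[fun ϖ' => ω ϖ' • Y ϖ'|m]) ϖ)) ⬝ᵥ w ϖ) μ ∧
    ∫ ϖ, Y ϖ ⬝ᵥ x' ϖ ∂μ - ∫ ϖ, Z ϖ ⬝ᵥ x ϖ ∂μ =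
      ∫ ϖ, (-(φv ϖ ⬝ᵥ x ϖ) +
        ((B ϖ)ᵀ *ᵥ ((μ[Y|m]) ϖ) + (E ϖ)ᵀ *ᵥ ((μ[fun ϖ' => ω ϖ' • Y ϖ'|m]) ϖ)) ⬝ᵥ w ϖ) ∂μ := by
  haveI : SigmaFinite (μ.trim hm) := inferInstance
  set u : Ω → Fin n₁ → ℝ := μ[Y|m] with hu
  set v : Ω → Fin n₁ → ℝ := μ[fun ϖ' => ω ϖ' • Y ϖ'|m] with hv
  set aF : Ω → Fin n₁ → ℝ := fun ϖ => A ϖ *ᵥ x ϖ + B ϖ *ᵥ w ϖ with haF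
  set gF : Ω → Fin n₁ → ℝ := fun ϖ => D ϖ *ᵥ x ϖ + E ϖ *ᵥ w ϖ with hgF
  -- coordinate L² facts
  have hY2i : ∀ i, MemLp (fun ϖ => Y ϖ i) 2 μ := fun i => memL2_eval hY2 i
  have hx2i : ∀ i, MemLp (fun ϖ => x ϖ i) 2 μ := fun i => memL2_eval hx2 i
  have hx'2i : ∀ i, MemLp (fun ϖ => x' ϖ i) 2 μ := fun i => memL2_eval hx'2 i
  have hw2i : ∀ i, MemLp (fun ϖ => w ϖ i) 2 μ := fun i => memL2_eval hw2 i
  have hφ2i : ∀ i, MemLp (fun ϖ => φv ϖ i) 2 μ := fun i => memL2_eval hφ2 i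
  have hAsm : ∀ i j, AEStronglyMeasurable (fun ϖ => A ϖ i j) μ :=
    fun i j => ((hA i j).mono hm le_rfl).aestronglyMeasurable
  have hBsm : ∀ i j, AEStronglyMeasurable (fun ϖ => B ϖ i j) μ :=
    fun i j => ((hB i j).mono hm le_rfl).aestronglyMeasurable
  have hDsm : ∀ i j, AEStronglyMeasurable (fun ϖ => D ϖ i j) μ :=
    fun i j => ((hD i j).mono hm le_rfl).aestronglyMeasurable
  have hEsm : ∀ i j, AEStronglyMeasurable (fun ϖ => E ϖ i j) μ :=
    fun i j => ((hE i j).mono hm le_rfl).aestronglyMeasurable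
  have ha2 : ∀ i, MemLp (fun ϖ => aF ϖ i) 2 μ := by
    intro i
    have h1 := mem2_mulVec (M := A) hAsm (fun i j => (hAb.imp fun C hC ϖ => hC ϖ i j)) hx2i i
    have h2 := mem2_mulVec (M := B) hBsm (fun i j => (hBb.imp fun C hC ϖ => hC ϖ i j)) hw2i i
    exact (h1.add h2).ae_eq (Filter.Eventually.of_forall fun ϖ => rfl)
  have hg2 : ∀ i, MemLp (fun ϖ => gF ϖ i) 2 μ := by
    intro i
    have h1 := mem2_mulVec (M := D) hDsm (fun i j => (hDb.imp fun C hC ϖ => hC ϖ i j)) hx2i i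
    have h2 := mem2_mulVec (M := E) hEsm (fun i j => (hEb.imp fun C hC ϖ => hC ϖ i j)) hw2i i
    exact (h1.add h2).ae_eq (Filter.Eventually.of_forall fun ϖ => rfl)
  -- strong measurability of coordinates of aF, gF w.r.t. m
  have hxm : ∀ j, Measurable[m] fun ϖ => x ϖ j :=
    fun j => (measurable_pi_apply j).comp hx.measurable
  have hwm : ∀ j, Measurable[m] fun ϖ => w ϖ j :=
    fun j => (measurable_pi_apply j).comp hw.measurable
  have haSM : ∀ i, StronglyMeasurable[m] fun ϖ => aF ϖ i := by
    intro i
    have h : (fun ϖ => aF ϖ i)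
        = fun ϖ => (∑ j, A ϖ i j * x ϖ j) + ∑ j, B ϖ i j * w ϖ j := by
      funext ϖ; simp [haF, Matrix.mulVec, dotProduct]
    rw [h]
    exact ((Finset.measurable_sum _ fun j _ => (hA i j).mul (hxm j)).add
      (Finset.measurable_sum _ fun j _ => (hB i j).mul (hwm j))).stronglyMeasurable
  have hgSM : ∀ i, StronglyMeasurable[m] fun ϖ => gF ϖ i := by
    intro i
    have h : (fun ϖ => gF ϖ i)
        = fun ϖ => (∑ j, D ϖ i j * x ϖ j) + ∑ j, E ϖ i j * w ϖ j := by
      funext ϖ; simp [hgF, Matrix.mulVec, dotProduct]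
    rw [h]
    exact ((Finset.measurable_sum _ fun j _ => (hD i j).mul (hxm j)).add
      (Finset.measurable_sum _ fun j _ => (hE i j).mul (hwm j))).stronglyMeasurable
  -- ω·gF coordinates are L²
  have hb2 : ∀ i, MemLp (fun ϖ => ω ϖ * gF ϖ i) 2 μ := by
    intro i
    refine MemLp.ae_eq ?_ ((hx'2i i).sub (ha2 i))
    filter_upwards [hrec] with ϖ h
    show x' ϖ i - aF ϖ i = ω ϖ * gF ϖ i
    rw [h]
    simp [haF, hgF, Pi.add_apply, Pi.smul_apply, smul_eq_mul]
    ring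
  -- condExp coordinates
  have hYint : Integrable Y μ := hY2.integrable one_le_two
  have hωY : Integrable (fun ϖ => ω ϖ • Y ϖ) μ := by
    have h1 : (1 : ENNReal)/1 = 1/2 + 1/2 := by
      rw [ENNReal.div_add_div_same]
      norm_num
      rw [eq_comm, ENNReal.div_eq_one_iff] <;> norm_num
    have h : MemLp (ω • Y) 1 μ := hY2.smul hω2
    exact (memLp_one_iff_integrable.mp h).congr (Filter.Eventually.of_forall fun ϖ => rfl)
  have hui : ∀ i, (fun ϖ => u ϖ i) =ᵐ[μ] μ[fun ϖ => Y ϖ i|m] :=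
    fun i => condExp_apply_ae hm hYint i
  have hvi : ∀ i, (fun ϖ => v ϖ i) =ᵐ[μ] μ[fun ϖ => ω ϖ * Y ϖ i|m] :=
    fun i => condExp_apply_ae hm hωY i
  have hu2 : ∀ i, MemLp (fun ϖ => u ϖ i) 2 μ := by
    intro i
    have h1 : MemLp (μ[fun ϖ => (1:ℝ) * Y ϖ i|m]) 2 μ := by
      refine memL2_condExp_mul hm (memLp_const 1) (hY2i i) ?_
      have h2 : (fun _ : Ω => (1:ℝ)^2) = fun _ : Ω => (1:ℝ) := by norm_num
      rw [h2, condExp_const hm]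
      exact Filter.Eventually.of_forall fun _ => rfl
    refine MemLp.ae_eq ?_ h1
    exact (condExp_congr_ae (Filter.Eventually.of_forall fun ϖ => by simp)).trans (hui i).symm
  have hv2 : ∀ i, MemLp (fun ϖ => v ϖ i) 2 μ :=
    fun i => MemLp.ae_eq (hvi i).symm (memL2_condExp_mul hm hω2 (hY2i i) hωvar)
  -- L² coordinates of the transposed matrix-vector products
  have hAu2 : ∀ i, MemLp (fun ϖ => ((A ϖ)ᵀ *ᵥ u ϖ) i) 2 μ :=
    mem2_mulVec (M := fun ϖ => (A ϖ)ᵀ) (fun i j => hAsm j i)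
      (fun i j => (hAb.imp fun C hC ϖ => hC ϖ j i)) hu2
  have hBu2 : ∀ i, MemLp (fun ϖ => ((B ϖ)ᵀ *ᵥ u ϖ) i) 2 μ :=
    mem2_mulVec (M := fun ϖ => (B ϖ)ᵀ) (fun i j => hBsm j i)
      (fun i j => (hBb.imp fun C hC ϖ => hC ϖ j i)) hu2
  have hDv2 : ∀ i, MemLp (fun ϖ => ((D ϖ)ᵀ *ᵥ v ϖ) i) 2 μ :=
    mem2_mulVec (M := fun ϖ => (D ϖ)ᵀ) (fun i j => hDsm j i)
      (fun i j => (hDb.imp fun C hC ϖ => hC ϖ j i)) hv2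
  have hEv2 : ∀ i, MemLp (fun ϖ => ((E ϖ)ᵀ *ᵥ v ϖ) i) 2 μ :=
    mem2_mulVec (M := fun ϖ => (E ϖ)ᵀ) (fun i j => hEsm j i)
      (fun i j => (hEb.imp fun C hC ϖ => hC ϖ j i)) hv2
  -- integrability of the summand pieces
  have hint1 : ∀ i, Integrable (fun ϖ => Y ϖ i * aF ϖ i) μ :=
    fun i => integrable_mul2 (hY2i i) (ha2 i)
  have hint2 : ∀ i, Integrable (fun ϖ => Y ϖ i * (ω ϖ * gF ϖ i)) μ := by
    intro i
    exact (integrable_mul2 (hb2 i) (hY2i i)).congr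
      (Filter.Eventually.of_forall fun ϖ => by ring)
  -- main pieces
  have IntAx : Integrable (fun ϖ => ((A ϖ)ᵀ *ᵥ u ϖ) ⬝ᵥ x ϖ) μ := integrable_dot hAu2 hx2i
  have IntBw : Integrable (fun ϖ => ((B ϖ)ᵀ *ᵥ u ϖ) ⬝ᵥ w ϖ) μ := integrable_dot hBu2 hw2i
  have IntDx : Integrable (fun ϖ => ((D ϖ)ᵀ *ᵥ v ϖ) ⬝ᵥ x ϖ) μ := integrable_dot hDv2 hx2i
  have IntEw : Integrable (fun ϖ => ((E ϖ)ᵀ *ᵥ v ϖ) ⬝ᵥ w ϖ) μ := integrable_dot hEv2 hw2i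
  have Intφx : Integrable (fun ϖ => φv ϖ ⬝ᵥ x ϖ) μ := integrable_dot hφ2i hx2i
  -- RHS integrable
  have hRHS : Integrable (fun ϖ => -(φv ϖ ⬝ᵥ x ϖ) +
      ((B ϖ)ᵀ *ᵥ u ϖ + (E ϖ)ᵀ *ᵥ v ϖ) ⬝ᵥ w ϖ) μ := by
    refine (Intφx.neg.add (IntBw.add IntEw)).congr
      (Filter.Eventually.of_forall fun ϖ => ?_)
    simp [add_dotProduct]
  refine ⟨hRHS, ?_⟩
  -- Step 1: expand ∫ Y ⬝ x'
  have E1 : ∫ ϖ, Y ϖ ⬝ᵥ x' ϖ ∂μ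
      = (∑ i, ∫ ϖ, Y ϖ i * aF ϖ i ∂μ) + ∑ i, ∫ ϖ, Y ϖ i * (ω ϖ * gF ϖ i) ∂μ := by
    have h1 : (fun ϖ => Y ϖ ⬝ᵥ x' ϖ) =ᵐ[μ]
        fun ϖ => (∑ i, Y ϖ i * aF ϖ i) + ∑ i, Y ϖ i * (ω ϖ * gF ϖ i) := by
      filter_upwards [hrec] with ϖ h
      rw [show x' ϖ = aF ϖ + ω ϖ • gF ϖ from h]
      simp [dotProduct, Pi.add_apply, Pi.smul_apply, smul_eq_mul, mul_add,
        Finset.sum_add_distrib]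
    rw [integral_congr_ae h1,
      integral_add (integrable_finset_sum _ fun i _ => hint1 i)
        (integrable_finset_sum _ fun i _ => hint2 i),
      integral_finset_sum _ fun i _ => hint1 i,
      integral_finset_sum _ fun i _ => hint2 i]
  -- Step 2: pull out conditional expectations, term by term
  have E2 : ∀ i, ∫ ϖ, Y ϖ i * aF ϖ i ∂μ = ∫ ϖ, aF ϖ i * u ϖ i ∂μ := by
    intro i
    have h1 : ∫ ϖ, Y ϖ i * aF ϖ i ∂μ = ∫ ϖ, aF ϖ i * Y ϖ i ∂μ :=
      integral_congr_ae (Filter.Eventually.of_forall fun ϖ => by ring)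
    rw [h1, pullout hm (haSM i) ((hY2i i).integrable one_le_two)
      (integrable_mul2 (ha2 i) (hY2i i))]
    refine integral_congr_ae ?_
    filter_upwards [hui i] with ϖ h
    rw [← h]
  have E3 : ∀ i, ∫ ϖ, Y ϖ i * (ω ϖ * gF ϖ i) ∂μ = ∫ ϖ, gF ϖ i * v ϖ i ∂μ := by
    intro i
    have h1 : ∫ ϖ, Y ϖ i * (ω ϖ * gF ϖ i) ∂μ = ∫ ϖ, gF ϖ i * (ω ϖ * Y ϖ i) ∂μ :=
      integral_congr_ae (Filter.Eventually.of_forall fun ϖ => by ring)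
    rw [h1, pullout hm (hgSM i) (integrable_mul2 hω2 (hY2i i))
      ((integrable_mul2 (hb2 i) (hY2i i)).congr
        (Filter.Eventually.of_forall fun ϖ => by ring))]
    refine integral_congr_ae ?_
    filter_upwards [hvi i] with ϖ h
    rw [← h]
  -- Step 3: reassemble sums into dot products
  have E4 : ∑ i, ∫ ϖ, aF ϖ i * u ϖ i ∂μ
      = (∫ ϖ, ((A ϖ)ᵀ *ᵥ u ϖ) ⬝ᵥ x ϖ ∂μ) + ∫ ϖ, ((B ϖ)ᵀ *ᵥ u ϖ) ⬝ᵥ w ϖ ∂μ := by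
    have h1 : ∀ i, Integrable (fun ϖ => aF ϖ i * u ϖ i) μ :=
      fun i => integrable_mul2 (ha2 i) (hu2 i)
    rw [← integral_finset_sum _ fun i _ => h1 i]
    have h2 : (fun ϖ => ∑ i, aF ϖ i * u ϖ i)
        = fun ϖ => ((A ϖ)ᵀ *ᵥ u ϖ) ⬝ᵥ x ϖ + ((B ϖ)ᵀ *ᵥ u ϖ) ⬝ᵥ w ϖ := by
      funext ϖ
      have h3 : (∑ i, aF ϖ i * u ϖ i) = u ϖ ⬝ᵥ aF ϖ := by
        simp [dotProduct, mul_comm]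
      rw [h3, show aF ϖ = A ϖ *ᵥ x ϖ + B ϖ *ᵥ w ϖ from rfl, dotProduct_add,
        Matrix.mulVec_transpose, Matrix.mulVec_transpose,
        Matrix.dotProduct_mulVec, Matrix.dotProduct_mulVec]
    rw [h2, integral_add IntAx IntBw]
  have E5 : ∑ i, ∫ ϖ, gF ϖ i * v ϖ i ∂μ
      = (∫ ϖ, ((D ϖ)ᵀ *ᵥ v ϖ) ⬝ᵥ x ϖ ∂μ) + ∫ ϖ, ((E ϖ)ᵀ *ᵥ v ϖ) ⬝ᵥ w ϖ ∂μ := by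
    have h1 : ∀ i, Integrable (fun ϖ => gF ϖ i * v ϖ i) μ :=
      fun i => integrable_mul2 (hg2 i) (hv2 i)
    rw [← integral_finset_sum _ fun i _ => h1 i]
    have h2 : (fun ϖ => ∑ i, gF ϖ i * v ϖ i)
        = fun ϖ => ((D ϖ)ᵀ *ᵥ v ϖ) ⬝ᵥ x ϖ + ((E ϖ)ᵀ *ᵥ v ϖ) ⬝ᵥ w ϖ := by
      funext ϖ
      have h3 : (∑ i, gF ϖ i * v ϖ i) = v ϖ ⬝ᵥ gF ϖ := by
        simp [dotProduct, mul_comm]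
      rw [h3, show gF ϖ = D ϖ *ᵥ x ϖ + E ϖ *ᵥ w ϖ from rfl, dotProduct_add,
        Matrix.mulVec_transpose, Matrix.mulVec_transpose,
        Matrix.dotProduct_mulVec, Matrix.dotProduct_mulVec]
    rw [h2, integral_add IntDx IntEw]
  -- Step 4: expand ∫ Z ⬝ x using the backward recursion
  have E6 : ∫ ϖ, Z ϖ ⬝ᵥ x ϖ ∂μ
      = (∫ ϖ, ((A ϖ)ᵀ *ᵥ u ϖ) ⬝ᵥ x ϖ ∂μ) + (∫ ϖ, ((D ϖ)ᵀ *ᵥ v ϖ) ⬝ᵥ x ϖ ∂μ)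
        + ∫ ϖ, φv ϖ ⬝ᵥ x ϖ ∂μ := by
    have h1 : (fun ϖ => Z ϖ ⬝ᵥ x ϖ) =ᵐ[μ]
        fun ϖ => ((A ϖ)ᵀ *ᵥ u ϖ) ⬝ᵥ x ϖ + ((D ϖ)ᵀ *ᵥ v ϖ) ⬝ᵥ x ϖ + φv ϖ ⬝ᵥ x ϖ := by
      filter_upwards [hback] with ϖ h
      rw [h]
      simp [add_dotProduct]
    have IntAD : Integrable (fun ϖ => ((A ϖ)ᵀ *ᵥ u ϖ) ⬝ᵥ x ϖ + ((D ϖ)ᵀ *ᵥ v ϖ) ⬝ᵥ x ϖ) μ :=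
      (IntAx.add IntDx).congr (Filter.Eventually.of_forall fun ϖ => rfl)
    rw [integral_congr_ae h1, integral_add IntAD Intφx, integral_add IntAx IntDx]
  -- Step 5: expand the RHS
  have E7 : ∫ ϖ, (-(φv ϖ ⬝ᵥ x ϖ) + ((B ϖ)ᵀ *ᵥ u ϖ + (E ϖ)ᵀ *ᵥ v ϖ) ⬝ᵥ w ϖ) ∂μ
      = -(∫ ϖ, φv ϖ ⬝ᵥ x ϖ ∂μ) + ((∫ ϖ, ((B ϖ)ᵀ *ᵥ u ϖ) ⬝ᵥ w ϖ ∂μ)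
        + ∫ ϖ, ((E ϖ)ᵀ *ᵥ v ϖ) ⬝ᵥ w ϖ ∂μ) := by
    have h1 : (fun ϖ => -(φv ϖ ⬝ᵥ x ϖ) + ((B ϖ)ᵀ *ᵥ u ϖ + (E ϖ)ᵀ *ᵥ v ϖ) ⬝ᵥ w ϖ)
        = fun ϖ => -(φv ϖ ⬝ᵥ x ϖ) + (((B ϖ)ᵀ *ᵥ u ϖ) ⬝ᵥ w ϖ + ((E ϖ)ᵀ *ᵥ v ϖ) ⬝ᵥ w ϖ) := by
      funext ϖ; simp [add_dotProduct]
    have IntBE : Integrable (fun ϖ => ((B ϖ)ᵀ *ᵥ u ϖ) ⬝ᵥ w ϖ + ((E ϖ)ᵀ *ᵥ v ϖ) ⬝ᵥ w ϖ) μ :=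
      (IntBw.add IntEw).congr (Filter.Eventually.of_forall fun ϖ => rfl)
    have Intnφ : Integrable (fun ϖ => -(φv ϖ ⬝ᵥ x ϖ)) μ :=
      Intφx.neg.congr (Filter.Eventually.of_forall fun ϖ => rfl)
    rw [h1, integral_add Intnφ IntBE, integral_neg, integral_add IntBw IntEw]
  -- combine
  rw [E1, Finset.sum_congr rfl fun i _ => E2 i, Finset.sum_congr rfl fun i _ => E3 i,
    E4, E5, E6, E7]
  ring

end

end Stmt6Aux

open Stmt6Aux

/-- Discrete duality (summation by parts) for the forward-backward pair:
if `x^w` satisfies `x^w_{k+1} = A_k x^w_k + B_k w_k + (D_k x^w_k + E_k w_k) ω_k` with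
`x^w_0 = 0` and `y` satisfies the backward recursion
`y_k = A_kᵀ E[y_{k+1}|F_{k-1}] + D_kᵀ E[y_{k+1} ω_k|F_{k-1}] + φ_k`, then
`E⟨y_N, x^w_N⟩ = E Σ_{k<N} [-⟨φ_k, x^w_k⟩ + ⟨B_kᵀ E[y_{k+1}|F_{k-1}] +
E_kᵀ E[y_{k+1} ω_k|F_{k-1}], w_k⟩]`.  Here `G k` denotes `F_{k-1}`. -/
theorem stmt_6 {Ω : Type*} {m0 : MeasurableSpace Ω} (μ : Measure Ω)
    [IsProbabilityMeasure μ]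
    (n m N : ℕ) (G : ℕ → MeasurableSpace Ω)
    (hGmono : ∀ k, G k ≤ G (k + 1)) (hGle : ∀ k, G k ≤ m0)
    (hGtriv : ∀ s, MeasurableSet[G 0] s → μ s = 0 ∨ μ s = 1)
    (A D : ℕ → Ω → Matrix (Fin n) (Fin n) ℝ)
    (B E : ℕ → Ω → Matrix (Fin n) (Fin m) ℝ)
    (hAmeas : ∀ k i j, Measurable[G k] fun ϖ => A k ϖ i j)
    (hBmeas : ∀ k i j, Measurable[G k] fun ϖ => B k ϖ i j)
    (hDmeas : ∀ k i j, Measurable[G k] fun ϖ => D k ϖ i j)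
    (hEmeas : ∀ k i j, Measurable[G k] fun ϖ => E k ϖ i j)
    (hAbdd : ∀ k, ∃ C : ℝ, ∀ ϖ i j, |A k ϖ i j| ≤ C)
    (hBbdd : ∀ k, ∃ C : ℝ, ∀ ϖ i j, |B k ϖ i j| ≤ C)
    (hDbdd : ∀ k, ∃ C : ℝ, ∀ ϖ i j, |D k ϖ i j| ≤ C)
    (hEbdd : ∀ k, ∃ C : ℝ, ∀ ϖ i j, |E k ϖ i j| ≤ C)
    (ω : ℕ → Ω → ℝ)
    (hωmeas : ∀ k, Measurable[G (k + 1)] (ω k))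
    (hωL2 : ∀ k, MemLp (ω k) 2 μ)
    (hωmean : ∀ k, μ[ω k|G k] =ᵐ[μ] 0)
    (hωvar : ∀ k, μ[fun ϖ => (ω k ϖ) ^ 2|G k] =ᵐ[μ] 1)
    (w : ℕ → Ω → Fin m → ℝ) (φ : ℕ → Ω → Fin n → ℝ)
    (hwmeas : ∀ k, StronglyMeasurable[G k] (w k))
    (hwL2 : ∀ k, MemLp (w k) 2 μ)
    (hφmeas : ∀ k, StronglyMeasurable[G k] (φ k))
    (hφL2 : ∀ k, MemLp (φ k) 2 μ)
    (xw : ℕ → Ω → Fin n → ℝ)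
    (hxwmeas : ∀ k, StronglyMeasurable[G (k + 1)] (xw (k + 1)))
    (hxwL2 : ∀ k, MemLp (xw k) 2 μ)
    (hxw0 : ∀ ϖ, xw 0 ϖ = 0)
    (hxw : ∀ k < N, ∀ᵐ ϖ ∂μ, xw (k + 1) ϖ =
      (A k ϖ).mulVec (xw k ϖ) + (B k ϖ).mulVec (w k ϖ) +
        ω k ϖ • ((D k ϖ).mulVec (xw k ϖ) + (E k ϖ).mulVec (w k ϖ)))
    (y : ℕ → Ω → Fin n → ℝ)
    (hymeas : ∀ k, StronglyMeasurable[G (k + 1)] (y (k + 1)))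
    (hyL2 : ∀ k, MemLp (y k) 2 μ)
    (hy : ∀ k < N, ∀ᵐ ϖ ∂μ, y k ϖ =
      (A k ϖ)ᵀ.mulVec ((μ[y (k + 1)|G k]) ϖ) +
        (D k ϖ)ᵀ.mulVec ((μ[fun ϖ' => ω k ϖ' • y (k + 1) ϖ'|G k]) ϖ) + φ k ϖ) :
    ∫ ϖ, y N ϖ ⬝ᵥ xw N ϖ ∂μ =
      ∫ ϖ, ∑ k ∈ Finset.range N,
        (-(φ k ϖ ⬝ᵥ xw k ϖ) +
          ((B k ϖ)ᵀ.mulVec ((μ[y (k + 1)|G k]) ϖ) +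
            (E k ϖ)ᵀ.mulVec ((μ[fun ϖ' => ω k ϖ' • y (k + 1) ϖ'|G k]) ϖ)) ⬝ᵥ w k ϖ) ∂μ := by
  have hxSM : ∀ k, StronglyMeasurable[G k] (xw k) := by
    intro k
    match k with
    | 0 =>
      have h : xw 0 = fun _ => (0 : Fin n → ℝ) := funext fun ϖ => hxw0 ϖ
      rw [h]; exact stronglyMeasurable_const
    | (k+1) => exact hxwmeas k
  have step := fun (k : ℕ) (hk : k < N) =>
    step_aux (hGle k) (A k) (D k) (B k) (E k) (hAmeas k) (hBmeas k) (hDmeas k) (hEmeas k)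
      (hAbdd k) (hBbdd k) (hDbdd k) (hEbdd k)
      (ω k) (hωL2 k) (hωvar k)
      (xw k) (xw (k+1)) (hxSM k) (hxwL2 k) (hxwL2 (k+1))
      (w k) (hwmeas k) (hwL2 k)
      (φ k) (hφL2 k)
      (y (k+1)) (y k) (hyL2 (k+1))
      (hxw k hk) (hy k hk)
  have T0 : ∫ ϖ, y 0 ϖ ⬝ᵥ xw 0 ϖ ∂μ = 0 := by
    have h : ∀ ϖ, y 0 ϖ ⬝ᵥ xw 0 ϖ = 0 := fun ϖ => by rw [hxw0 ϖ]; simp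
    simp only [h, integral_zero]
  have tel := Finset.sum_range_sub (f := fun k => ∫ ϖ, y k ϖ ⬝ᵥ xw k ϖ ∂μ) N
  rw [T0, sub_zero] at tel
  rw [← tel, Finset.sum_congr rfl fun k hk => (step k (Finset.mem_range.mp hk)).2,
    ← integral_finset_sum _ fun k hk => (step k (Finset.mem_range.mp hk)).1]
end

section
/- One-step relation in the decoupling ansatz: suppose Y_k = T_k x_k + φ_k for all k, x_{k+1} = A_k x_k + Λ²_k π_k + b_k + (D_k x_k + Λ⁴_k π_k + σ_k) ω_k, and the backward equation Y_k = Ã_k^⊤ E[Y_{k+1}|F_{k-1}] + D̃_k^⊤ E[Y_{k+1}ω_k|F_{k-1}] + Λ⁵_k x_k + Λ⁶ᵀ_k π_k + λ¹_k holds, where x_k, π_k and all coefficients at step k are F_{k-1}-measurable, T_{k+1}, φ_{k+1} are F_k-measurable, and E[ω_k|F_{k-1}] = 0, E[ω_k²|F_{k-1}] = 1. Then almost surely T_k x_k + φ_k = Δ(T_{k+1}) x_k + L^⊤(T_{k+1}) π_k + Θ(T_{k+1}, φ_{k+1}), with Δ, L, Θ as defined via conditional expectations E[T_{k+1}|F_{k-1}],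 E[T_{k+1}ω_k|F_{k-1}], E[T_{k+1}ω_k²|F_{k-1}], E[φ_{k+1}|F_{k-1}], E[φ_{k+1}ω_k|F_{k-1}]. -/
open Matrix MeasureTheory

section Helpers

variable {Ω : Type*} {m m0 : MeasurableSpace Ω} {μ : MeasureTheory.Measure Ω}

lemma my_pi_integrable {ι : Type*} [Fintype ι] {f : Ω → ι → ℝ}
    (hfm : AEStronglyMeasurable f μ) (h : ∀ i, Integrable (fun ϖ => f ϖ i) μ) :
    Integrable f μ := by
  refine Integrable.mono' (integrable_finset_sum Finset.univ fun i _ => (h i).norm) hfm ?_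
  refine Filter.Eventually.of_forall fun ϖ => ?_
  refine (pi_norm_le_iff_of_nonneg (Finset.sum_nonneg fun i _ => norm_nonneg _)).2 fun i => ?_
  exact Finset.single_le_sum (f := fun j => ‖f ϖ j‖) (fun j _ => norm_nonneg _) (Finset.mem_univ i)

lemma my_condexp_pi_apply {ι : Type*} [Fintype ι] (hm : m ≤ m0) [IsFiniteMeasure μ]
    {f : Ω → ι → ℝ} (hf : Integrable f μ) (i : ι) :
    (fun ϖ => (μ[f|m]) ϖ i) =ᵐ[μ] μ[fun ϖ => f ϖ i|m] := by
  have hproj : ∀ {g : Ω → ι → ℝ}, Integrable g μ → Integrable (fun ϖ => g ϖ i) μ := fun hg =>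
    (ContinuousLinearMap.proj (R := ℝ) (φ := fun _ : ι => ℝ) i).integrable_comp hg
  refine ae_eq_condExp_of_forall_setIntegral_eq hm (hproj hf)
    (fun s _ _ => (hproj integrable_condExp).integrableOn) (fun s hs hμs => ?_) ?_
  · have h1 := (ContinuousLinearMap.proj (R := ℝ) (φ := fun _ : ι => ℝ) i).integral_comp_comm
      (integrable_condExp (f := f) (m := m)).integrableOn (μ := μ.restrict s)
    have h2 := (ContinuousLinearMap.proj (R := ℝ) (φ := fun _ : ι => ℝ) i).integral_comp_comm
      hf.integrableOn (μ := μ.restrict s)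
    simp only [ContinuousLinearMap.proj_apply] at h1 h2
    rw [h1, h2, setIntegral_condExp hm hf hs]
  · exact ((continuous_apply i).comp_stronglyMeasurable
      (stronglyMeasurable_condExp (f := f))).aestronglyMeasurable

lemma my_memℒp_bdd_mul [IsFiniteMeasure μ] {c g : Ω → ℝ} (hc : AEStronglyMeasurable c μ)
    {C : ℝ} (hC : ∀ ϖ, |c ϖ| ≤ C) (hg : MemLp g 2 μ) :
    MemLp (fun ϖ => c ϖ * g ϖ) 2 μ := by
  refine MemLp.of_le_mul (c := C) hg (hc.mul hg.1) (Filter.Eventually.of_forall fun ϖ => ?_)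
  have := mul_le_mul_of_nonneg_right (hC ϖ) (abs_nonneg (g ϖ))
  simpa [abs_mul] using this

lemma my_memℒp_mul_bdd [IsFiniteMeasure μ] {c g : Ω → ℝ} (hc : AEStronglyMeasurable c μ)
    {C : ℝ} (hC : ∀ ϖ, |c ϖ| ≤ C) (hg : MemLp g 2 μ) :
    MemLp (fun ϖ => g ϖ * c ϖ) 2 μ := by
  refine MemLp.of_le_mul (c := C) hg (hg.1.mul hc) (Filter.Eventually.of_forall fun ϖ => ?_)
  have := mul_le_mul_of_nonneg_right (hC ϖ) (abs_nonneg (g ϖ))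
  calc ‖g ϖ * c ϖ‖ = |c ϖ| * |g ϖ| := by simp [abs_mul, mul_comm]
  _ ≤ C * |g ϖ| := this
  _ = C * ‖g ϖ‖ := by simp

lemma my_L2_mul_integrable {f g : Ω → ℝ} (hf : MemLp f 2 μ) (hg : MemLp g 2 μ) :
    Integrable (fun ϖ => f ϖ * g ϖ) μ := by
  haveI : ENNReal.HolderTriple 2 2 1 := ⟨by rw [ENNReal.inv_two_add_inv_two, inv_one]⟩
  have := hg.smul hf (r := 1)
  rw [memLp_one_iff_integrable] at this
  exact (by simpa [smul_eq_mul] using this : Integrable (f * g) μ)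

lemma my_pull (hm : m ≤ m0) [IsFiniteMeasure μ] {c g : Ω → ℝ}
    (hc : StronglyMeasurable[m] c) (hc2 : MemLp c 2 μ) (hg2 : MemLp g 2 μ) :
    μ[fun ϖ => c ϖ * g ϖ|m] =ᵐ[μ] fun ϖ => c ϖ * (μ[g|m]) ϖ :=
  condExp_mul_of_stronglyMeasurable_left hc (my_L2_mul_integrable hc2 hg2) (hg2.integrable one_le_two)

lemma my_memℒp_apply {ι : Type*} [Fintype ι] {f : Ω → ι → ℝ} (hf : MemLp f 2 μ) (i : ι) :
    MemLp (fun ϖ => f ϖ i) 2 μ :=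
  (ContinuousLinearMap.proj (R := ℝ) (φ := fun _ : ι => ℝ) i).comp_memLp' hf

lemma my_condexp_sum_pull {ι : Type*} [Fintype ι] (hm : m ≤ m0) [IsFiniteMeasure μ]
    {c g E : ι → Ω → ℝ}
    (hc : ∀ j, StronglyMeasurable[m] (c j)) (hc2 : ∀ j, MemLp (c j) 2 μ)
    (hg2 : ∀ j, MemLp (g j) 2 μ) (hE : ∀ j, E j =ᵐ[μ] μ[g j|m]) :
    μ[fun ϖ => ∑ j, c j ϖ * g j ϖ|m] =ᵐ[μ] fun ϖ => ∑ j, c j ϖ * E j ϖ := by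
  have h1 : (fun ϖ => ∑ j, c j ϖ * g j ϖ) = ∑ j, fun ϖ => c j ϖ * g j ϖ := by
    ext ϖ; simp
  rw [h1]
  refine (condExp_finsetSum (fun j _ => my_L2_mul_integrable (hc2 j) (hg2 j)) m).trans ?_
  have hj : ∀ j : ι, μ[fun ϖ => c j ϖ * g j ϖ|m] =ᵐ[μ] fun ϖ => c j ϖ * E j ϖ := fun j =>
    (my_pull hm (hc j) (hc2 j) (hg2 j)).trans (by filter_upwards [hE j] with ϖ h; rw [h])
  filter_upwards [ae_all_iff.2 hj] with ϖ h
  simp only [Finset.sum_apply]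
  exact Finset.sum_congr rfl fun j _ => h j

lemma my_condExp_add3 (hm : m ≤ m0) [IsFiniteMeasure μ] {a b c : Ω → ℝ}
    (ha : Integrable a μ) (hb : Integrable b μ) (hc : Integrable c μ) :
    μ[fun ϖ => a ϖ + (b ϖ + c ϖ)|m] =ᵐ[μ]
      fun ϖ => (μ[a|m]) ϖ + ((μ[b|m]) ϖ + (μ[c|m]) ϖ) := by
  have h1 := condExp_add (μ := μ) (m := m) ha (hb.add hc)
  have h2 := condExp_add (μ := μ) (m := m) hb hc
  filter_upwards [h1, h2] with ϖ e1 e2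
  have : (fun ϖ => a ϖ + (b ϖ + c ϖ)) = a + (b + c) := rfl
  rw [this]
  calc (μ[a + (b + c)|m]) ϖ = (μ[a|m]) ϖ + (μ[b + c|m]) ϖ := e1
  _ = (μ[a|m]) ϖ + ((μ[b|m]) ϖ + (μ[c|m]) ϖ) := by rw [e2]; simp

end Helpers

/-- One-step relation in the decoupling ansatz: if `Y_k = T_k x_k + φ_k`
and `Y_{k+1} = T_{k+1} x_{k+1} + φ_{k+1}`, `x_{k+1}` follows the forward dynamics, and
the backward equation holds, then almost surely
`T_k x_k + φ_k = Δ(T_{k+1}) x_k + Lᵀ(T_{k+1}) π_k + Θ(T_{k+1}, φ_{k+1})`, where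
`Δ, Lᵀ, Θ` are built from the conditional expectations `E[T_{k+1}|F]`,
`E[T_{k+1}ω|F]`, `E[T_{k+1}ω²|F]`, `E[φ_{k+1}|F]`, `E[φ_{k+1}ω|F]` (`F = F_{k-1}`);
the matrix conditional expectations are given entrywise by `ET, ETw, ETw2`. -/
theorem stmt_19 {Ω : Type*} {m0 : MeasurableSpace Ω} (μ : Measure Ω)
    [IsProbabilityMeasure μ]
    (n m l : ℕ) (G G' : MeasurableSpace Ω) (hGG' : G ≤ G') (hG' : G' ≤ m0)
    -- noise: E[ω|F] = 0, E[ω²|F] = 1, E[ω⁴] < ∞, ω is F_k-measurable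
    (ω : Ω → ℝ) (hωmeas : Measurable[G'] ω) (hωL4 : MemLp ω 4 μ)
    (hωmean : μ[ω|G] =ᵐ[μ] 0)
    (hωvar : μ[fun ϖ => (ω ϖ) ^ 2|G] =ᵐ[μ] 1)
    -- coefficients at step k, F_{k-1}-measurable and essentially bounded
    (tA tD : Ω → Matrix (Fin (2 * n)) (Fin (2 * n)) ℝ)
    (A Dm : Ω → Matrix (Fin n) (Fin n) ℝ)
    (Λ2 Λ4 : Ω → Matrix (Fin n) (Fin (m + l)) ℝ)
    (Λ5 : Ω → Matrix (Fin (2 * n)) (Fin n) ℝ)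
    (Λ6 : Ω → Matrix (Fin (m + l)) (Fin (2 * n)) ℝ)
    (lam1 : Ω → Fin (2 * n) → ℝ)
    (htAmeas : ∀ i j, Measurable[G] fun ϖ => tA ϖ i j)
    (htDmeas : ∀ i j, Measurable[G] fun ϖ => tD ϖ i j)
    (hAmeas : ∀ i j, Measurable[G] fun ϖ => A ϖ i j)
    (hDmmeas : ∀ i j, Measurable[G] fun ϖ => Dm ϖ i j)
    (hΛ2meas : ∀ i j, Measurable[G] fun ϖ => Λ2 ϖ i j)
    (hΛ4meas : ∀ i j, Measurable[G] fun ϖ => Λ4 ϖ i j)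
    (hΛ5meas : ∀ i j, Measurable[G] fun ϖ => Λ5 ϖ i j)
    (hΛ6meas : ∀ i j, Measurable[G] fun ϖ => Λ6 ϖ i j)
    (hbound : ∃ C : ℝ, ∀ ϖ, (∀ i j, |tA ϖ i j| ≤ C) ∧ (∀ i j, |tD ϖ i j| ≤ C) ∧
      (∀ i j, |A ϖ i j| ≤ C) ∧ (∀ i j, |Dm ϖ i j| ≤ C) ∧
      (∀ i j, |Λ2 ϖ i j| ≤ C) ∧ (∀ i j, |Λ4 ϖ i j| ≤ C) ∧
      (∀ i j, |Λ5 ϖ i j| ≤ C) ∧ (∀ i j, |Λ6 ϖ i j| ≤ C))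
    (hlam1meas : StronglyMeasurable[G] lam1) (hlam1L2 : MemLp lam1 2 μ)
    -- state, control, inhomogeneous terms at step k (F_{k-1}-measurable, L²)
    (x : Ω → Fin n → ℝ) (π : Ω → Fin (m + l) → ℝ) (b σv : Ω → Fin n → ℝ)
    (hxmeas : StronglyMeasurable[G] x) (hxL2 : MemLp x 2 μ)
    (hπmeas : StronglyMeasurable[G] π) (hπL2 : MemLp π 2 μ)
    (hbmeas : StronglyMeasurable[G] b) (hbL2 : MemLp b 2 μ)
    (hσmeas : StronglyMeasurable[G] σv) (hσL2 : MemLp σv 2 μ)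
    -- T_k, T_{k+1}, φ_k, φ_{k+1}, Y_k, Y_{k+1}, x_{k+1}
    (Tk Tn : Ω → Matrix (Fin (2 * n)) (Fin n) ℝ)
    (hTnmeas : ∀ i j, Measurable[G'] fun ϖ => Tn ϖ i j)
    (hTnbdd : ∃ C : ℝ, ∀ ϖ i j, |Tn ϖ i j| ≤ C)
    (φk φn : Ω → Fin (2 * n) → ℝ)
    (hφnmeas : StronglyMeasurable[G'] φn) (hφnL2 : MemLp φn 2 μ)
    (Yk Yn : Ω → Fin (2 * n) → ℝ) (xn : Ω → Fin n → ℝ)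
    -- ansatz and dynamics
    (hYk : ∀ᵐ ϖ ∂μ, Yk ϖ = (Tk ϖ).mulVec (x ϖ) + φk ϖ)
    (hYn : ∀ᵐ ϖ ∂μ, Yn ϖ = (Tn ϖ).mulVec (xn ϖ) + φn ϖ)
    (hxn : ∀ᵐ ϖ ∂μ, xn ϖ =
      (A ϖ).mulVec (x ϖ) + (Λ2 ϖ).mulVec (π ϖ) + b ϖ +
        ω ϖ • ((Dm ϖ).mulVec (x ϖ) + (Λ4 ϖ).mulVec (π ϖ) + σv ϖ))
    (hback : ∀ᵐ ϖ ∂μ, Yk ϖ =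
      (tA ϖ)ᵀ.mulVec ((μ[Yn|G]) ϖ) +
        (tD ϖ)ᵀ.mulVec ((μ[fun ϖ' => ω ϖ' • Yn ϖ'|G]) ϖ) +
        (Λ5 ϖ).mulVec (x ϖ) + (Λ6 ϖ)ᵀ.mulVec (π ϖ) + lam1 ϖ)
    -- entrywise versions of the matrix conditional expectations
    (ET ETw ETw2 : Ω → Matrix (Fin (2 * n)) (Fin n) ℝ)
    (hET : ∀ i j, (fun ϖ => ET ϖ i j) =ᵐ[μ] μ[fun ϖ => Tn ϖ i j|G])
    (hETw : ∀ i j, (fun ϖ => ETw ϖ i j) =ᵐ[μ] μ[fun ϖ => ω ϖ * Tn ϖ i j|G])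
    (hETw2 : ∀ i j, (fun ϖ => ETw2 ϖ i j) =ᵐ[μ] μ[fun ϖ => (ω ϖ) ^ 2 * Tn ϖ i j|G]) :
    ∀ᵐ ϖ ∂μ,
      (Tk ϖ).mulVec (x ϖ) + φk ϖ =
        (Λ5 ϖ + (tA ϖ)ᵀ * ET ϖ * A ϖ + (tA ϖ)ᵀ * ETw ϖ * Dm ϖ +
          (tD ϖ)ᵀ * ETw ϖ * A ϖ + (tD ϖ)ᵀ * ETw2 ϖ * Dm ϖ).mulVec (x ϖ) +
        ((Λ6 ϖ)ᵀ + (tA ϖ)ᵀ * ET ϖ * Λ2 ϖ + (tA ϖ)ᵀ * ETw ϖ * Λ4 ϖ +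
          (tD ϖ)ᵀ * ETw ϖ * Λ2 ϖ + (tD ϖ)ᵀ * ETw2 ϖ * Λ4 ϖ).mulVec (π ϖ) +
        (lam1 ϖ +
          (tA ϖ)ᵀ.mulVec ((ET ϖ).mulVec (b ϖ) + (ETw ϖ).mulVec (σv ϖ) +
            (μ[φn|G]) ϖ) +
          (tD ϖ)ᵀ.mulVec ((ETw ϖ).mulVec (b ϖ) + (ETw2 ϖ).mulVec (σv ϖ) +
            (μ[fun ϖ' => ω ϖ' • φn ϖ'|G]) ϖ)) := by
  
  classical
  obtain ⟨C, hC⟩ := hbound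
  obtain ⟨CT, hCT⟩ := hTnbdd
  have hG : G ≤ m0 := hGG'.trans hG'
  have hω2 : MemLp ω 2 μ := hωL4.mono_exponent (by norm_num)
  have hhalf : (1 : ENNReal) / 2 = 1 / 4 + 1 / 4 := by
    rw [ENNReal.div_add_div_same, ENNReal.eq_div_iff (by norm_num) (by norm_num),
      show (4 : ENNReal) = 2 * 2 by norm_num, mul_assoc,
      ENNReal.mul_div_cancel' (by norm_num) (by norm_num)]
    norm_num
  have hωsq : MemLp (fun ϖ => ω ϖ ^ 2) 2 μ := by
    haveI : ENNReal.HolderTriple 4 4 2 := ⟨by rw [← one_div, ← one_div]; exact hhalf.symm⟩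
    have := hωL4.smul hωL4 (r := 2)
    exact (by simpa [smul_eq_mul, ← pow_two] using this : MemLp (ω ^ 2) 2 μ)
  -- componentwise facts for mulVec of a bounded G-measurable matrix with an L² vector
  have hmv : ∀ {k k' : ℕ} (M : Ω → Matrix (Fin k) (Fin k') ℝ) (w : Ω → Fin k' → ℝ),
      (∀ i j, Measurable[G] fun ϖ => M ϖ i j) → (∀ ϖ i j, |M ϖ i j| ≤ C) →
      StronglyMeasurable[G] w → MemLp w 2 μ → ∀ i,
      StronglyMeasurable[G] (fun ϖ => (M ϖ).mulVec (w ϖ) i) ∧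
        MemLp (fun ϖ => (M ϖ).mulVec (w ϖ) i) 2 μ := by
    intro k k' M w hM hMb hw hw2 i
    have hsm : ∀ j, StronglyMeasurable[G] fun ϖ => w ϖ j := fun j =>
      (continuous_apply j).comp_stronglyMeasurable hw
    constructor
    · have h1 : Measurable[G] fun ϖ => ∑ j, M ϖ i j * w ϖ j :=
        Finset.measurable_sum Finset.univ fun j _ => (hM i j).mul (hsm j).measurable
      have := h1.stronglyMeasurable
      simpa [Matrix.mulVec, dotProduct] using this
    · have h1 : MemLp (fun ϖ => ∑ j, M ϖ i j * w ϖ j) 2 μ :=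
        memLp_finsetSum Finset.univ fun j _ =>
          my_memℒp_bdd_mul (((hM i j).mono hG le_rfl).stronglyMeasurable.aestronglyMeasurable)
            (fun ϖ => hMb ϖ i j) (my_memℒp_apply hw2 j)
      simpa [Matrix.mulVec, dotProduct] using h1
  set u : Ω → Fin n → ℝ :=
    fun ϖ => (A ϖ).mulVec (x ϖ) + (Λ2 ϖ).mulVec (π ϖ) + b ϖ with hu_def
  set v : Ω → Fin n → ℝ :=
    fun ϖ => (Dm ϖ).mulVec (x ϖ) + (Λ4 ϖ).mulVec (π ϖ) + σv ϖ with hv_def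
  have hA1 := hmv A x hAmeas (fun ϖ => (hC ϖ).2.2.1) hxmeas hxL2
  have hA2 := hmv Λ2 π hΛ2meas (fun ϖ => (hC ϖ).2.2.2.2.1) hπmeas hπL2
  have hD1 := hmv Dm x hDmmeas (fun ϖ => (hC ϖ).2.2.2.1) hxmeas hxL2
  have hD2 := hmv Λ4 π hΛ4meas (fun ϖ => (hC ϖ).2.2.2.2.2.1) hπmeas hπL2
  have hu_sm : ∀ j, StronglyMeasurable[G] fun ϖ => u ϖ j := fun j =>
    ((hA1 j).1.add (hA2 j).1).add ((continuous_apply j).comp_stronglyMeasurable hbmeas)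
  have hu2 : ∀ j, MemLp (fun ϖ => u ϖ j) 2 μ := fun j =>
    ((hA1 j).2.add (hA2 j).2).add (my_memℒp_apply hbL2 j)
  have hv_sm : ∀ j, StronglyMeasurable[G] fun ϖ => v ϖ j := fun j =>
    ((hD1 j).1.add (hD2 j).1).add ((continuous_apply j).comp_stronglyMeasurable hσmeas)
  have hv2 : ∀ j, MemLp (fun ϖ => v ϖ j) 2 μ := fun j =>
    ((hD1 j).2.add (hD2 j).2).add (my_memℒp_apply hσL2 j)
  -- scalar facts about Tn, ω·Tn, ω²·Tn, φn
  have hTnaesm : ∀ i j, AEStronglyMeasurable[m0] (fun ϖ => Tn ϖ i j) μ := fun i j =>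
    ((hTnmeas i j).mono hG' le_rfl).stronglyMeasurable.aestronglyMeasurable
  have hTn2 : ∀ i j, MemLp (fun ϖ => Tn ϖ i j) 2 μ := fun i j =>
    MemLp.of_bound (hTnaesm i j) CT (Filter.Eventually.of_forall fun ϖ => by
      simpa using hCT ϖ i j)
  have hωTn2 : ∀ i j, MemLp (fun ϖ => ω ϖ * Tn ϖ i j) 2 μ := fun i j =>
    my_memℒp_mul_bdd (hTnaesm i j) (fun ϖ => hCT ϖ i j) hω2
  have hω2Tn2 : ∀ i j, MemLp (fun ϖ => ω ϖ ^ 2 * Tn ϖ i j) 2 μ := fun i j =>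
    my_memℒp_mul_bdd (hTnaesm i j) (fun ϖ => hCT ϖ i j) hωsq
  have hφn2 : ∀ i, MemLp (fun ϖ => φn ϖ i) 2 μ := fun i => my_memℒp_apply hφnL2 i
  -- the decomposed next-step functions
  set f' : Ω → Fin (2 * n) → ℝ := fun ϖ i =>
    (∑ j, u ϖ j * Tn ϖ i j) + ((∑ j, v ϖ j * (ω ϖ * Tn ϖ i j)) + φn ϖ i) with hf'_def
  set w' : Ω → Fin (2 * n) → ℝ := fun ϖ i =>
    (∑ j, u ϖ j * (ω ϖ * Tn ϖ i j)) + ((∑ j, v ϖ j * (ω ϖ ^ 2 * Tn ϖ i j)) + ω ϖ * φn ϖ i)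
    with hw'_def
  have hYnf : Yn =ᵐ[μ] f' := by
    filter_upwards [hYn, hxn] with ϖ h1 h2
    rw [h1, h2]
    funext i
    simp only [hf'_def, hu_def, hv_def, Pi.add_apply, Matrix.mulVec, dotProduct, Pi.smul_apply, smul_eq_mul]
    rw [← add_assoc]
    congr 1
    rw [← Finset.sum_add_distrib]
    exact Finset.sum_congr rfl fun j _ => by ring
  have hwf : (fun ϖ => ω ϖ • Yn ϖ) =ᵐ[μ] w' := by
    filter_upwards [hYnf] with ϖ h
    funext i
    have hi : Yn ϖ i = f' ϖ i := congrFun h i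
    simp only [Pi.smul_apply, smul_eq_mul, hi, hf'_def, hw'_def]
    rw [mul_add, mul_add, Finset.mul_sum, Finset.mul_sum]
    congr 1
    · exact Finset.sum_congr rfl fun j _ => by ring
    · congr 1
      exact Finset.sum_congr rfl fun j _ => by ring
  -- integrability
  have hS1int : ∀ i, Integrable (fun ϖ => ∑ j, u ϖ j * Tn ϖ i j) μ := fun i =>
    integrable_finset_sum Finset.univ fun j _ => my_L2_mul_integrable (hu2 j) (hTn2 i j)
  have hS2int : ∀ i, Integrable (fun ϖ => ∑ j, v ϖ j * (ω ϖ * Tn ϖ i j)) μ := fun i =>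
    integrable_finset_sum Finset.univ fun j _ => my_L2_mul_integrable (hv2 j) (hωTn2 i j)
  have hS1int' : ∀ i, Integrable (fun ϖ => ∑ j, u ϖ j * (ω ϖ * Tn ϖ i j)) μ := fun i =>
    integrable_finset_sum Finset.univ fun j _ => my_L2_mul_integrable (hu2 j) (hωTn2 i j)
  have hS2int' : ∀ i, Integrable (fun ϖ => ∑ j, v ϖ j * (ω ϖ ^ 2 * Tn ϖ i j)) μ := fun i =>
    integrable_finset_sum Finset.univ fun j _ => my_L2_mul_integrable (hv2 j) (hω2Tn2 i j)
  -- measurability at the ambient σ-algebra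
  have hu0 : ∀ j, Measurable[m0] fun ϖ => u ϖ j := fun j => ((hu_sm j).mono hG).measurable
  have hv0 : ∀ j, Measurable[m0] fun ϖ => v ϖ j := fun j => ((hv_sm j).mono hG).measurable
  have hTn0 : ∀ i j, Measurable[m0] fun ϖ => Tn ϖ i j := fun i j =>
    (hTnmeas i j).mono hG' le_rfl
  have hω0 : Measurable[m0] ω := hωmeas.mono hG' le_rfl
  have hφn0 : ∀ i, Measurable[m0] fun ϖ => φn ϖ i := fun i =>
    ((continuous_apply i).comp_stronglyMeasurable (hφnmeas.mono hG')).measurable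
  have hf'aesm : AEStronglyMeasurable[m0] f' μ := by
    have hmeas : Measurable[m0] f' := by
      letI : MeasurableSpace Ω := m0
      refine measurable_pi_iff.mpr fun i => ?_
      exact ((Finset.measurable_sum Finset.univ fun j _ => (hu0 j).mul (hTn0 i j)).add
      ((Finset.measurable_sum Finset.univ fun j _ =>
        (hv0 j).mul (hω0.mul (hTn0 i j))).add (hφn0 i)))
    exact hmeas.aestronglyMeasurable
  have hw'aesm : AEStronglyMeasurable[m0] w' μ := by
    have hmeas : Measurable[m0] w' := by
      letI : MeasurableSpace Ω := m0
      refine measurable_pi_iff.mpr fun i => ?_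
      exact ((Finset.measurable_sum Finset.univ fun j _ => (hu0 j).mul (hω0.mul (hTn0 i j))).add
      ((Finset.measurable_sum Finset.univ fun j _ =>
        (hv0 j).mul ((hω0.pow_const 2).mul (hTn0 i j))).add (hω0.mul (hφn0 i))))
    exact hmeas.aestronglyMeasurable
  have hYnInt : Integrable Yn μ := by
    refine (my_pi_integrable hf'aesm fun i => ?_).congr hYnf.symm
    exact ((hS1int i).add ((hS2int i).add ((hφn2 i).integrable one_le_two)))
  have hωYnInt : Integrable (fun ϖ => ω ϖ • Yn ϖ) μ := by
    refine (my_pi_integrable hw'aesm fun i => ?_).congr hwf.symm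
    exact ((hS1int' i).add ((hS2int' i).add (my_L2_mul_integrable hω2 (hφn2 i))))
  have hφnInt : Integrable φn μ := hφnL2.integrable one_le_two
  have hωφnInt : Integrable (fun ϖ => ω ϖ • φn ϖ) μ := by
    refine my_pi_integrable ((hω0.aestronglyMeasurable).smul
      (hφnmeas.mono hG').aestronglyMeasurable) fun i => ?_
    exact (my_L2_mul_integrable hω2 (hφn2 i)).congr
      (Filter.Eventually.of_forall fun ϖ => by simp)
  -- key conditional expectation computations, componentwise
  have key1 : ∀ i, μ[fun ϖ => f' ϖ i|G] =ᵐ[μ]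
      fun ϖ => (∑ j, u ϖ j * ET ϖ i j) +
        ((∑ j, v ϖ j * ETw ϖ i j) + (μ[fun ϖ' => φn ϖ' i|G]) ϖ) := by
    intro i
    have hS1 := my_condexp_sum_pull hG (c := fun j ϖ => u ϖ j) (g := fun j ϖ => Tn ϖ i j)
      (E := fun j ϖ => ET ϖ i j) hu_sm hu2 (fun j => hTn2 i j) (fun j => hET i j)
    have hS2 := my_condexp_sum_pull hG (c := fun j ϖ => v ϖ j)
      (g := fun j ϖ => ω ϖ * Tn ϖ i j) (E := fun j ϖ => ETw ϖ i j)
      hv_sm hv2 (fun j => hωTn2 i j) (fun j => hETw i j)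
    have hadd := my_condExp_add3 hG (hS1int i) (hS2int i) ((hφn2 i).integrable one_le_two)
    refine hadd.trans ?_
    filter_upwards [hS1, hS2] with ϖ e1 e2
    rw [e1, e2]
  have key2 : ∀ i, μ[fun ϖ => w' ϖ i|G] =ᵐ[μ]
      fun ϖ => (∑ j, u ϖ j * ETw ϖ i j) +
        ((∑ j, v ϖ j * ETw2 ϖ i j) + (μ[fun ϖ' => ω ϖ' * φn ϖ' i|G]) ϖ) := by
    intro i
    have hS1 := my_condexp_sum_pull hG (c := fun j ϖ => u ϖ j)
      (g := fun j ϖ => ω ϖ * Tn ϖ i j) (E := fun j ϖ => ETw ϖ i j)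
      hu_sm hu2 (fun j => hωTn2 i j) (fun j => hETw i j)
    have hS2 := my_condexp_sum_pull hG (c := fun j ϖ => v ϖ j)
      (g := fun j ϖ => ω ϖ ^ 2 * Tn ϖ i j) (E := fun j ϖ => ETw2 ϖ i j)
      hv_sm hv2 (fun j => hω2Tn2 i j) (fun j => hETw2 i j)
    have hadd := my_condExp_add3 hG (hS1int' i) (hS2int' i)
      (my_L2_mul_integrable hω2 (hφn2 i))
    refine hadd.trans ?_
    filter_upwards [hS1, hS2] with ϖ e1 e2
    rw [e1, e2]
  -- vector-level identities
  have hV1 : ∀ᵐ ϖ ∂μ, (μ[Yn|G]) ϖ =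
      (ET ϖ).mulVec (u ϖ) + ((ETw ϖ).mulVec (v ϖ) + (μ[φn|G]) ϖ) := by
    have hcomp : ∀ i, ∀ᵐ ϖ ∂μ, (μ[Yn|G]) ϖ i =
        (∑ j, u ϖ j * ET ϖ i j) + ((∑ j, v ϖ j * ETw ϖ i j) + (μ[φn|G]) ϖ i) := by
      intro i
      have e0 := my_condexp_pi_apply hG hYnInt i
      have e1 : μ[fun ϖ => Yn ϖ i|G] =ᵐ[μ] μ[fun ϖ => f' ϖ i|G] :=
        condExp_congr_ae (hYnf.mono fun ϖ h => congrFun h i)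
      have e3 := my_condexp_pi_apply hG hφnInt i
      filter_upwards [e0, e1.trans (key1 i), e3] with ϖ a0 a1 a3
      rw [a0, a1, ← a3]
    filter_upwards [ae_all_iff.2 hcomp] with ϖ h
    funext i
    rw [h i]
    simp only [Pi.add_apply, Matrix.mulVec, dotProduct]
    congr 1
    · exact Finset.sum_congr rfl fun j _ => mul_comm _ _
    · congr 1
      exact Finset.sum_congr rfl fun j _ => mul_comm _ _
  have hV2 : ∀ᵐ ϖ ∂μ, (μ[fun ϖ' => ω ϖ' • Yn ϖ'|G]) ϖ =
      (ETw ϖ).mulVec (u ϖ) + ((ETw2 ϖ).mulVec (v ϖ) + (μ[fun ϖ' => ω ϖ' • φn ϖ'|G]) ϖ) := by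
    have hcomp : ∀ i, ∀ᵐ ϖ ∂μ, (μ[fun ϖ' => ω ϖ' • Yn ϖ'|G]) ϖ i =
        (∑ j, u ϖ j * ETw ϖ i j) + ((∑ j, v ϖ j * ETw2 ϖ i j) +
          (μ[fun ϖ' => ω ϖ' • φn ϖ'|G]) ϖ i) := by
      intro i
      have e0 := my_condexp_pi_apply hG hωYnInt i
      have e1 : μ[fun ϖ => (ω ϖ • Yn ϖ) i|G] =ᵐ[μ] μ[fun ϖ => w' ϖ i|G] :=
        condExp_congr_ae (hwf.mono fun ϖ h => by
          simpa using congrFun h i)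
      have e3 : (fun ϖ => (μ[fun ϖ' => ω ϖ' • φn ϖ'|G]) ϖ i) =ᵐ[μ]
          μ[fun ϖ => ω ϖ * φn ϖ i|G] := by
        refine (my_condexp_pi_apply hG hωφnInt i).trans
          (condExp_congr_ae (Filter.Eventually.of_forall fun ϖ => by simp))
      filter_upwards [e0, e1.trans (key2 i), e3] with ϖ a0 a1 a3
      rw [a0, a1, ← a3]
    filter_upwards [ae_all_iff.2 hcomp] with ϖ h
    funext i
    rw [h i]
    simp only [Pi.add_apply, Matrix.mulVec, dotProduct]
    congr 1
    · exact Finset.sum_congr rfl fun j _ => mul_comm _ _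
    · congr 1
      exact Finset.sum_congr rfl fun j _ => mul_comm _ _
  -- final assembly
  filter_upwards [hYk, hback, hV1, hV2] with ϖ e0 e1 e2 e3
  rw [← e0, e1, e2, e3]
  simp only [hu_def, hv_def]
  simp only [Matrix.mulVec_add, Matrix.add_mulVec, Matrix.mulVec_mulVec, Matrix.mul_assoc]
  abel
end
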